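/- The set $S$ of all zeros of all convex combinations of incomplete polynomials equals the closed convex hull of $\{z_1,\dots,z_n\}$: $S=\{w\in\mathbb{C}: A_n^\gamma(w)=0 \text{ for some } \gamma\} = H(z_1,\dots,z_n)$. -/

import Mathlib

open Polynomial Finset Complex

private lemma re_repr (f : ℂ →L[ℝ] ℝ) :
    ∃ c : ℂ, ∀ v : ℂ, (c * v).re = f v := by
  refine ⟨(f 1 : ℝ) - (f Complex.I : ℝ) * Complex.I, fun v => ?_⟩
  have h1 : f v = v.re * f 1 + v.im * f Complex.I := by
    conv_lhs => rw [← Complex.re_add_im v]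
    have : (v.re : ℂ) + (v.im : ℂ) * Complex.I
        = v.re • (1 : ℂ) + v.im • Complex.I := by
      simp [Complex.real_smul]
    rw [this, map_add, map_smul, map_smul, smul_eq_mul, smul_eq_mul]
  rw [h1]
  simp [Complex.mul_re, Complex.sub_re, Complex.sub_im, Complex.ofReal_mul]
  ring

theorem zero_set_of_convex_combinations_eq_convexHull
    (n : ℕ) (hn : 2 ≤ n) (z : ℕ → ℂ) :
    {w : ℂ | ∃ γ : ℕ → ℝ, (∀ k ∈ Finset.range n, 0 ≤ γ k) ∧
        (∑ k ∈ Finset.range n, γ k = 1) ∧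
        (∑ k ∈ Finset.range n, C ((γ k : ℂ)) *
          ∏ j ∈ (Finset.range n).erase k, (X - C (z j))).IsRoot w}
      = convexHull ℝ (↑((Finset.range n).image z) : Set ℂ) := by
  ext w
  simp only [Set.mem_setOf_eq]
  constructor
  · rintro ⟨γ, hγ0, hγ1, hroot⟩
    have heval : ∑ k ∈ Finset.range n, (γ k : ℂ) *
        ∏ j ∈ (Finset.range n).erase k, (w - z j) = 0 := by
      simpa [Polynomial.IsRoot, Polynomial.eval_finset_sum, Polynomial.eval_prod] using hroot
    by_contra hw
    obtain ⟨f, u, hfu, huw⟩ := geometric_hahn_banach_closed_point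
      (convex_convexHull ℝ _)
      ((Set.Finite.isCompact_convexHull (𝕜 := ℝ) (Finset.finite_toSet _)).isClosed) hw
    obtain ⟨c, hc⟩ := re_repr f
    have hzk : ∀ k ∈ Finset.range n, f (z k) < u := by
      intro k hk
      exact hfu _ (subset_convexHull ℝ _ (by simp; exact ⟨k, Finset.mem_range.mp hk, rfl⟩))
    have hne : ∀ k ∈ Finset.range n, w - z k ≠ 0 := by
      intro k hk h
      have hwz : w = z k := sub_eq_zero.mp h
      rw [hwz] at huw
      linarith [hzk k hk]
    have hpos : ∀ k ∈ Finset.range n, 0 < (c * (w - z k)).re := by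
      intro k hk
      rw [hc, map_sub]
      have := hzk k hk
      linarith
    -- the sum of inverses vanishes
    set P : ℂ := ∏ j ∈ Finset.range n, (w - z j) with hP
    have hPne : P ≠ 0 := Finset.prod_ne_zero_iff.mpr hne
    have hT : ∑ k ∈ Finset.range n, (γ k : ℂ) * (w - z k)⁻¹ = 0 := by
      have h2 : ∑ k ∈ Finset.range n, (γ k : ℂ) *
          ∏ j ∈ (Finset.range n).erase k, (w - z j)
          = (∑ k ∈ Finset.range n, (γ k : ℂ) * (w - z k)⁻¹) * P := by
        rw [Finset.sum_mul]
        refine Finset.sum_congr rfl fun k hk => ?_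
        have h3 : (w - z k) * ∏ j ∈ (Finset.range n).erase k, (w - z j) = P :=
          Finset.mul_prod_erase (Finset.range n) (fun j => w - z j) hk
        rw [mul_assoc]
        congr 1
        field_simp [hne k hk]
        linear_combination h3
      rw [h2] at heval
      exact (mul_eq_zero.mp heval).resolve_right hPne
    have hT' : ∑ k ∈ Finset.range n, (γ k : ℂ) * ((starRingEnd ℂ) (w - z k))⁻¹ = 0 := by
      have := congrArg (starRingEnd ℂ) hT
      simpa [map_sum, map_mul, map_inv₀, Complex.conj_ofReal] using this
    have hre : ∑ k ∈ Finset.range n, γ k * (c * ((starRingEnd ℂ) (w - z k))⁻¹).re = 0 := by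
      have := congrArg (fun x => (c * x).re) hT'
      simpa [Finset.mul_sum, Complex.re_sum, mul_left_comm c, Complex.re_ofReal_mul] using this
    have hposre : ∀ k ∈ Finset.range n, 0 < (c * ((starRingEnd ℂ) (w - z k))⁻¹).re := by
      intro k hk
      have ha := hne k hk
      have hinv : ((starRingEnd ℂ) (w - z k))⁻¹
          = (w - z k) * ((Complex.normSq (w - z k) : ℝ) : ℂ)⁻¹ := by
        rw [Complex.inv_def]
        simp [← map_sub, Complex.normSq_conj]
      rw [hinv, ← mul_assoc, ← Complex.ofReal_inv, mul_comm (c * (w - z k)),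
        Complex.re_ofReal_mul]
      have h4 : 0 < Complex.normSq (w - z k) := Complex.normSq_pos.mpr ha
      exact mul_pos (inv_pos.mpr h4) (hpos k hk)
    obtain ⟨k0, hk0, hγk0⟩ := Finset.exists_ne_zero_of_sum_ne_zero (by rw [hγ1]; norm_num : ∑ k ∈ Finset.range n, γ k ≠ 0)
    have : 0 < ∑ k ∈ Finset.range n, γ k * (c * ((starRingEnd ℂ) (w - z k))⁻¹).re := by
      refine Finset.sum_pos' (fun k hk => mul_nonneg (hγ0 k hk) (hposre k hk).le) ⟨k0, hk0, ?_⟩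
      exact mul_pos (lt_of_le_of_ne (hγ0 k0 hk0) (Ne.symm hγk0)) (hposre k0 hk0)
    linarith [hre]
  · intro hw
    rw [Finset.convexHull_eq] at hw
    obtain ⟨W, hW0, hW1, hWc⟩ := hw
    rw [Finset.centerMass_eq_of_sum_1 _ _ hW1] at hWc
    set t : ℕ → ℝ := fun k => W (z k) / (#{j ∈ Finset.range n | z j = z k} : ℝ) with ht
    have ht0 : ∀ k ∈ Finset.range n, 0 ≤ t k := by
      intro k hk
      exact div_nonneg (hW0 _ (Finset.mem_image_of_mem z hk)) (Nat.cast_nonneg _)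
    have hfiber : ∀ (F : ℂ → ℂ), ∀ i ∈ Finset.range n,
        ∑ j ∈ Finset.range n with z j = z i, (t j : ℂ) * F (z j)
          = (W (z i) : ℂ) * F (z i) := by
      intro F i hi
      have hmem : i ∈ {j' ∈ Finset.range n | z j' = z i} := Finset.mem_filter.mpr ⟨hi, rfl⟩
      have hcN : ((#{j' ∈ Finset.range n | z j' = z i} : ℕ) : ℂ) ≠ 0 :=
        Nat.cast_ne_zero.mpr (Finset.card_pos.mpr ⟨i, hmem⟩).ne'
      have hconst : ∀ j ∈ Finset.filter (fun j => z j = z i) (Finset.range n),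
          (t j : ℂ) * F (z j)
          = ((W (z i) / (#{j' ∈ Finset.range n | z j' = z i} : ℝ) : ℝ) : ℂ) * F (z i) := by
        intro j hj
        rw [Finset.mem_filter] at hj
        simp only [ht, hj.2]
      rw [Finset.sum_congr rfl hconst, Finset.sum_const, nsmul_eq_mul]
      push_cast
      field_simp
    have hA : ∑ k ∈ Finset.range n, (t k : ℂ) = 1 := by
      have h1 := Finset.sum_image' (s := Finset.range n) (g := z)
        (f := fun y => ((W y : ℝ) : ℂ)) (fun j => (t j : ℂ))
        (fun i hi => by simpa using (hfiber (fun _ => 1) i hi).symm)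
      have h2 : ∑ y ∈ Finset.image z (Finset.range n), ((W y : ℝ) : ℂ) = 1 := by
        push_cast [← Complex.ofReal_sum]
        exact_mod_cast hW1
      rw [← h1, h2]
    have hB : ∑ k ∈ Finset.range n, (t k : ℂ) * z k = w := by
      have h1 := Finset.sum_image' (s := Finset.range n) (g := z)
        (f := fun y => ((W y : ℝ) : ℂ) * y) (fun j => (t j : ℂ) * z j)
        (fun i hi => (hfiber id i hi).symm)
      have h2 : ∑ y ∈ Finset.image z (Finset.range n), ((W y : ℝ) : ℂ) * y = w := by
        rw [← hWc]
        exact Finset.sum_congr rfl fun y _ => by simp [Complex.real_smul]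
      rw [← h1, h2]
    have hsumt : ∑ k ∈ Finset.range n, t k = 1 := by
      have : ((∑ k ∈ Finset.range n, t k : ℝ) : ℂ) = 1 := by push_cast; exact hA
      exact_mod_cast this
    by_cases hcase : ∃ j ∈ Finset.range n, w = z j
    · obtain ⟨j, hj, hwj⟩ := hcase
      obtain ⟨k0, hk0, hk0j⟩ : ∃ k0 ∈ Finset.range n, k0 ≠ j := by
        rcases Nat.eq_zero_or_pos j with h | h
        · exact ⟨1, Finset.mem_range.mpr (by omega), by omega⟩
        · exact ⟨0, Finset.mem_range.mpr (by omega), by omega⟩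
      refine ⟨fun k => if k = k0 then 1 else 0, ?_, ?_, ?_⟩
      · intro k _; by_cases h : k = k0 <;> simp [h]
      · rw [Finset.sum_ite_eq' (Finset.range n) k0 (fun _ => (1:ℝ))]
        simp [hk0]
      · simp only [Polynomial.IsRoot, Polynomial.eval_finset_sum, Polynomial.eval_mul,
          Polynomial.eval_prod, Polynomial.eval_sub, Polynomial.eval_X, Polynomial.eval_C]
        rw [Finset.sum_eq_single k0]
        · have hjmem : j ∈ (Finset.range n).erase k0 :=
            Finset.mem_erase.mpr ⟨fun h => hk0j h.symm, hj⟩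
          rw [Finset.prod_eq_zero hjmem (by rw [hwj]; ring)]
          ring
        · intro k _ hkk0
          simp [hkk0]
        · intro h
          exact absurd hk0 h
    · push_neg at hcase
      have hane : ∀ k ∈ Finset.range n, w - z k ≠ 0 := fun k hk =>
        sub_ne_zero.mpr (hcase k hk)
      set D : ℝ := ∑ k ∈ Finset.range n, t k * Complex.normSq (w - z k) with hD
      have hDpos : 0 < D := by
        obtain ⟨k0, hk0, htk0⟩ := Finset.exists_ne_zero_of_sum_ne_zero
          (by rw [hsumt]; norm_num : ∑ k ∈ Finset.range n, t k ≠ 0)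
        refine Finset.sum_pos' (fun k hk => mul_nonneg (ht0 k hk) (Complex.normSq_nonneg _))
          ⟨k0, hk0, mul_pos (lt_of_le_of_ne (ht0 k0 hk0) (Ne.symm htk0))
            (Complex.normSq_pos.mpr (hane k0 hk0))⟩
      refine ⟨fun k => t k * Complex.normSq (w - z k) / D, ?_, ?_, ?_⟩
      · intro k hk
        exact div_nonneg (mul_nonneg (ht0 k hk) (Complex.normSq_nonneg _)) hDpos.le
      · rw [← Finset.sum_div, ← hD, div_self hDpos.ne']
      · simp only [Polynomial.IsRoot, Polynomial.eval_finset_sum, Polynomial.eval_mul,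
          Polynomial.eval_prod, Polynomial.eval_sub, Polynomial.eval_X, Polynomial.eval_C]
        set P : ℂ := ∏ j ∈ Finset.range n, (w - z j) with hP
        have hzero : ∑ k ∈ Finset.range n, (t k : ℂ) * (starRingEnd ℂ) (w - z k) = 0 := by
          have h0 : ∑ k ∈ Finset.range n, (t k : ℂ) * (w - z k) = 0 := by
            have : ∑ k ∈ Finset.range n, (t k : ℂ) * (w - z k)
                = (∑ k ∈ Finset.range n, (t k : ℂ)) * w
                  - ∑ k ∈ Finset.range n, (t k : ℂ) * z k := by
              rw [Finset.sum_mul, ← Finset.sum_sub_distrib]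
              exact Finset.sum_congr rfl fun k _ => by ring
            rw [this, hA, hB, one_mul, sub_self]
          have := congrArg (starRingEnd ℂ) h0
          simpa [map_sum, map_mul, Complex.conj_ofReal] using this
        have hterm : ∀ k ∈ Finset.range n,
            ((t k * Complex.normSq (w - z k) / D : ℝ) : ℂ)
              * ∏ j ∈ (Finset.range n).erase k, (w - z j)
            = ((D : ℝ) : ℂ)⁻¹ * P * ((t k : ℂ) * (starRingEnd ℂ) (w - z k)) := by
          intro k hk
          have h3 : (w - z k) * ∏ j ∈ (Finset.range n).erase k, (w - z j) = P :=
            Finset.mul_prod_erase (Finset.range n) (fun j => w - z j) hk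
          have h4 : ((Complex.normSq (w - z k) : ℝ) : ℂ)
              = (w - z k) * (starRingEnd ℂ) (w - z k) := (Complex.mul_conj _).symm
          push_cast
          rw [h4, ← h3]
          have hD0 : ((D : ℝ) : ℂ) ≠ 0 := by
            exact_mod_cast Complex.ofReal_ne_zero.mpr hDpos.ne'
          field_simp
        rw [Finset.sum_congr rfl hterm, ← Finset.mul_sum, hzero, mul_zero]
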